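/- The maximum over π ∈ S_n of the average of inv over the coset π·Z_n (where Z_n is the cyclic group generated by c_n = (1,2,…,n)) equals (2n−1)(n−1)/6; equivalently, max_{π ∈ S_n} Σ_{i=1}^n inv(π·c_n^i) = n·(2n−1)(n−1)/6. -/

import Mathlib

open Finset

def inversions {n : ℕ} (π : Equiv.Perm (Fin n)) : ℕ :=
  (Finset.univ.filter (fun p : Fin n × Fin n => p.1 < p.2 ∧ π p.2 < π p.1)).card

def winv {n : ℕ} (π : Equiv.Perm (Fin n)) : ℤ :=
  ∑ p ∈ Finset.univ.filter (fun p : Fin n × Fin n => p.1 < p.2 ∧ π p.2 < π p.1),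
    ((π p.1 : ℤ) - (π p.2 : ℤ))

def cwinv {n : ℕ} (π : Equiv.Perm (Fin n)) : ℤ :=
  n * inversions π - 2 * winv π

section
variable {n : ℕ}

section AuxMAI
variable {n : ℕ}
open Fin.NatCast

lemma card_val_filter (n : ℕ) (p : ℕ → Prop) [DecidablePred p] :
    (univ.filter fun w : Fin n => p w.val).card = ((range n).filter p).card := by
  apply Finset.card_bij (fun w _ => w.val)
  · intro a ha
    simp only [mem_filter, mem_range, mem_univ, true_and] at ha ⊢
    exact ⟨a.isLt, ha⟩
  · intro a _ b _ h; exact Fin.val_injective h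
  · intro b hb
    simp only [mem_filter, mem_range, mem_univ, true_and] at hb
    exact ⟨⟨b, hb.1⟩, by simp [hb.2], rfl⟩

lemma fin_add_lt_iff [NeZero n] (w D : Fin n) : w + D < w ↔ n ≤ w.val + D.val := by
  have hv : (w + D).val = (w.val + D.val) % n := Fin.val_add w D
  constructor
  · intro h
    by_contra hc
    push_neg at hc
    rw [Fin.lt_def, hv, Nat.mod_eq_of_lt hc] at h
    omega
  · intro h
    rw [Fin.lt_def, hv]
    have h2 : w.val + D.val - n < n := by have := w.isLt; have := D.isLt; omega
    have : (w.val + D.val) % n = w.val + D.val - n := by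
      rw [Nat.mod_eq_sub_mod h, Nat.mod_eq_of_lt h2]
    rw [this]
    have := D.isLt
    omega

lemma card_shift_lt [NeZero n] (D : Fin n) (hD : D ≠ 0) :
    (univ.filter fun w : Fin n => w + D < w).card = D.val := by
  have hn : 0 < n := D.pos
  have hD' : 0 < D.val := by
    rcases Nat.eq_zero_or_pos D.val with h | h
    · exact absurd (Fin.ext (by simp [h, Fin.val_zero])) hD
    · exact h
  have : ∀ w : Fin n, (w + D < w) ↔ (n - D.val ≤ w.val) := by
    intro w
    rw [fin_add_lt_iff]
    have := D.isLt
    omega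
  simp only [this]
  rw [card_val_filter]
  have : (range n).filter (fun a => n - D.val ≤ a) = Ico (n - D.val) n := by
    ext a; simp [mem_Ico]; omega
  rw [this, Nat.card_Ico]
  have := D.isLt
  omega

lemma card_rotations [NeZero n] {u v : Fin n} (huv : u ≠ v) :
    (univ.filter fun j : Fin n => u - j < v - j).card = (u - v : Fin n).val := by
  rw [← card_shift_lt (u - v) (sub_ne_zero.mpr huv)]
  apply Finset.card_equiv (Equiv.subLeft v)
  intro j
  simp only [mem_filter, mem_univ, true_and, Equiv.subLeft_apply]
  rw [show (v - j) + (u - v) = u - j by abel]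

lemma rot_pow {N : ℕ} (i : ℕ) (x : Fin (N + 1)) :
    ((finRotate (N + 1)) ^ i) x = x + (i : Fin (N + 1)) := by
  induction i with
  | zero => simp
  | succ k ih =>
    rw [pow_succ', Equiv.Perm.mul_apply, ih, finRotate_succ_apply]
    push_cast
    abel

lemma sum_Icc_inversions {N : ℕ} (π : Equiv.Perm (Fin (N + 1))) :
    ∑ i ∈ Icc 1 (N + 1), inversions (π * (finRotate (N + 1)) ^ i)
      = ∑ q ∈ univ.filter (fun q : Fin (N + 1) × Fin (N + 1) => π q.2 < π q.1),
          ((q.1 - q.2 : Fin (N + 1))).val := by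
  have hrot1 : (finRotate (N + 1)) ^ (N + 1) = 1 := by
    ext x
    simp [rot_pow, Fin.natCast_self]
  have hIcc : ∑ i ∈ Icc 1 (N + 1), inversions (π * (finRotate (N + 1)) ^ i)
      = ∑ i ∈ range (N + 1), inversions (π * (finRotate (N + 1)) ^ i) := by
    set f : ℕ → ℕ := fun i => inversions (π * (finRotate (N + 1)) ^ i) with hf
    have hfn : f (N + 1) = f 0 := by simp [hf, hrot1]
    have h1 : range (N + 1 + 1) = insert 0 (Icc 1 (N + 1)) := by
      ext a; simp [mem_range, mem_Icc]; omega
    have h2 : (range (N + 1 + 1)).sum f = f 0 + (Icc 1 (N + 1)).sum f := by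
      rw [h1, Finset.sum_insert (by simp)]
    have h3 : (range (N + 1 + 1)).sum f = (range (N + 1)).sum f + f (N + 1) :=
      Finset.sum_range_succ f (N + 1)
    show (Icc 1 (N + 1)).sum f = (range (N + 1)).sum f
    omega
  have key : ∀ i : ℕ, inversions (π * (finRotate (N + 1)) ^ i) =
      ∑ q : Fin (N + 1) × Fin (N + 1),
        if (q.1 - (i : Fin (N + 1)) < q.2 - (i : Fin (N + 1)) ∧ π q.2 < π q.1)
        then 1 else 0 := by
    intro i
    simp only [inversions, Finset.card_filter]
    refine Fintype.sum_equiv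
      (Equiv.prodCongr (Equiv.addRight (i : Fin (N + 1))) (Equiv.addRight (i : Fin (N + 1))))
      _ _ ?_
    intro p
    simp only [Equiv.prodCongr_apply, Equiv.coe_addRight, Prod.map, add_sub_cancel_right,
      Equiv.Perm.mul_apply, rot_pow]
  rw [hIcc]
  simp only [key]
  rw [Finset.sum_comm]
  rw [Finset.sum_filter]
  apply Finset.sum_congr rfl
  intro q _
  by_cases hB : π q.2 < π q.1
  · simp only [hB, and_true, if_true]
    have hne : q.1 ≠ q.2 := by
      intro h; rw [h] at hB; exact lt_irrefl _ hB
    rw [← Fin.sum_univ_eq_sum_range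
      (fun i => if (q.1 - (i : Fin (N + 1)) < q.2 - (i : Fin (N + 1))) then 1 else 0) (N + 1)]
    simp only [Fin.cast_val_eq_self]
    rw [← Finset.card_filter]
    exact card_rotations hne
  · simp [hB]


private def Gz (n : ℕ) : ℤ := ∑ k ∈ range n, (k : ℤ)
private def Qz (n : ℕ) : ℤ := ∑ k ∈ range n, (k : ℤ) ^ 2
private def Hz (n : ℕ) : ℤ := ∑ b ∈ range n, Gz b

private lemma gz (n : ℕ) : 2 * Gz n = n ^ 2 - n := by
  induction n with
  | zero => simp [Gz]
  | succ m ih =>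
    rw [Gz, Finset.sum_range_succ, ← Gz]
    push_cast
    linear_combination ih

private lemma qz (n : ℕ) : 6 * Qz n = 2 * (n : ℤ) ^ 3 - 3 * n ^ 2 + n := by
  induction n with
  | zero => simp [Qz]
  | succ m ih =>
    rw [Qz, Finset.sum_range_succ, ← Qz]
    push_cast
    linear_combination ih

private lemma hz (n : ℕ) : 6 * Hz n = (n : ℤ) ^ 3 - 3 * n ^ 2 + 2 * n := by
  induction n with
  | zero => simp [Hz]
  | succ m ih =>
    rw [Hz, Finset.sum_range_succ, ← Hz]
    push_cast
    linear_combination ih + 3 * gz m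

private lemma tri (n : ℕ) (f : ℕ → ℕ → ℤ) :
    ∑ a ∈ range n, ∑ b ∈ range n, (if a < b then f a b else 0)
      = ∑ b ∈ range n, ∑ a ∈ range b, f a b := by
  rw [Finset.sum_comm]
  apply Finset.sum_congr rfl
  intro b hb
  rw [← Finset.sum_filter]
  congr 1
  ext a
  simp only [mem_filter, mem_range] at *
  omega

private lemma Fnn (n : ℕ) :
    ∑ b ∈ range n, ∑ a ∈ range b, ((a : ℤ) + n - b) = Qz n := by
  have h1 : ∀ b : ℕ, ∑ a ∈ range b, ((a : ℤ) + n - b) = Gz b + b * ((n : ℤ) - b) := by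
    intro b
    have he : ∀ a : ℕ, (a : ℤ) + n - b = (a : ℤ) + ((n : ℤ) - b) := by intro a; ring
    simp only [he]
    rw [Finset.sum_add_distrib, Finset.sum_const, card_range, nsmul_eq_mul, Gz]
  calc ∑ b ∈ range n, ∑ a ∈ range b, ((a : ℤ) + n - b)
      = ∑ b ∈ range n, (Gz b + b * ((n : ℤ) - b)) :=
        Finset.sum_congr rfl (fun b _ => h1 b)
    _ = Hz n + ((n : ℤ) * Gz n - Qz n) := by
        rw [Finset.sum_add_distrib, ← Hz]
        congr 1
        rw [Gz, Qz, Finset.mul_sum, ← Finset.sum_sub_distrib]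
        apply Finset.sum_congr rfl
        intro b _
        ring
    _ = Qz n := by
        have h6 : 6 * (Hz n + ((n : ℤ) * Gz n - Qz n)) = 6 * Qz n := by
          linear_combination hz n + 3 * (n : ℤ) * gz n - 2 * qz n
        linarith

private lemma Sp_rev {N : ℕ} :
    ((∑ q ∈ univ.filter (fun q : Fin (N + 1) × Fin (N + 1) =>
        (Fin.revPerm : Equiv.Perm (Fin (N + 1))) q.2 < Fin.revPerm q.1),
        ((q.1 - q.2 : Fin (N + 1))).val : ℕ) : ℤ) = Qz (N + 1) := by
  have hfilt : (univ.filter (fun q : Fin (N + 1) × Fin (N + 1) =>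
      (Fin.revPerm : Equiv.Perm (Fin (N + 1))) q.2 < Fin.revPerm q.1))
      = univ.filter (fun q : Fin (N + 1) × Fin (N + 1) => q.1 < q.2) :=
    Finset.filter_congr (fun q _ => by simp [Fin.rev_lt_rev])
  rw [hfilt]
  push_cast
  have hterm : ∀ q ∈ univ.filter (fun q : Fin (N + 1) × Fin (N + 1) => q.1 < q.2),
      (((q.1 - q.2 : Fin (N + 1))).val : ℤ) = (q.1.val : ℤ) + (N + 1) - q.2.val := by
    intro q hq
    rw [mem_filter] at hq
    have hlt : q.1.val < q.2.val := hq.2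
    have h2 := q.2.isLt
    have : ((q.1 - q.2 : Fin (N + 1))).val = q.1.val + (N + 1 - q.2.val) := by
      rw [Fin.sub_def]
      simp only []
      rw [Nat.mod_eq_of_lt (by omega)]
      omega
    rw [this]
    push_cast [Nat.cast_sub (by omega : q.2.val ≤ N + 1)]
    ring
  rw [Finset.sum_congr rfl hterm, Finset.sum_filter, ← Finset.univ_product_univ,
    Finset.sum_product]
  have hstep : ∀ x : Fin (N + 1),
      (∑ y : Fin (N + 1), if x < y then (x.val : ℤ) + (N + 1) - y.val else 0)
      = ∑ b ∈ range (N + 1), (if x.val < b then (x.val : ℤ) + (N + 1) - b else 0) := by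
    intro x
    rw [← Fin.sum_univ_eq_sum_range (fun b => if x.val < b then (x.val : ℤ) + (N + 1) - b else 0)
      (N + 1)]
    apply Finset.sum_congr rfl
    intro y _
    congr 1
  simp only [hstep]
  rw [Fin.sum_univ_eq_sum_range
    (fun a => ∑ b ∈ range (N + 1), (if a < b then (a : ℤ) + (N + 1) - b else 0)) (N + 1)]
  rw [tri (N + 1) (fun a b => (a : ℤ) + (N + 1) - b)]
  rw [← Fnn (N + 1)]
  push_cast
  rfl

lemma card_prod_filter (p : Fin n × Fin n → Prop) [DecidablePred p] :
    (univ.filter p).card = ∑ x : Fin n, (univ.filter fun y : Fin n => p (y, x)).card := by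
  rw [Finset.card_filter, ← Finset.univ_product_univ, Finset.sum_product_right]
  apply Finset.sum_congr rfl
  intro x _
  rw [Finset.card_filter]

lemma cardP (π : Equiv.Perm (Fin n)) :
    (univ.filter fun q : Fin n × Fin n => π q.2 < π q.1).card = ∑ k ∈ range n, k := by
  have h1 : (univ.filter fun q : Fin n × Fin n => π q.2 < π q.1).card
      = (univ.filter fun q : Fin n × Fin n => q.2 < q.1).card := by
    apply Eq.symm
    apply Finset.card_equiv (Equiv.prodCongr π.symm π.symm)
    intro q
    simp [Equiv.prodCongr_apply]
  rw [h1, card_prod_filter]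
  have h2 : ∀ x : Fin n, (univ.filter fun y : Fin n => x < y).card = n - 1 - x.val := by
    intro x
    have he : (univ.filter fun y : Fin n => x < y)
        = (univ.filter fun y : Fin n => x.val < y.val) :=
      Finset.filter_congr (fun y _ => by simpa using Fin.lt_def)
    rw [he, card_val_filter]
    have : (range n).filter (fun a => x.val < a) = Ico (x.val + 1) n := by
      ext a; simp [mem_Ico]; omega
    rw [this, Nat.card_Ico]
    omega
  simp only [h2]
  rw [Fin.sum_univ_eq_sum_range (fun k => n - 1 - k) n]
  exact Finset.sum_range_reflect (fun j => j) n


lemma lemL [NeZero n] (π : Equiv.Perm (Fin n)) (t : ℕ) (ht : t + 1 ≤ n) :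
    ∑ j ∈ range (t + 1), j
      ≤ (univ.filter fun q : Fin n × Fin n => π q.2 < π q.1 ∧ (q.1 - q.2 : Fin n).val ≤ t).card := by
  rw [card_prod_filter]
  have hx : ∀ x : Fin n,
      t - (π x).val ≤ (univ.filter fun y : Fin n => π x < π y ∧ (y - x : Fin n).val ≤ t).card := by
    intro x
    set W := univ.filter (fun y : Fin n => 1 ≤ (y - x : Fin n).val ∧ (y - x : Fin n).val ≤ t)
      with hW
    have cardW : W.card = t := by
      rw [hW]
      have h1 : (univ.filter (fun y : Fin n => 1 ≤ (y - x : Fin n).val ∧ (y - x : Fin n).val ≤ t)).card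
          = (univ.filter (fun z : Fin n => 1 ≤ z.val ∧ z.val ≤ t)).card := by
        apply Finset.card_equiv (Equiv.subRight x)
        intro y
        simp [Equiv.subRight_apply]
      rw [h1, card_val_filter n (fun a => 1 ≤ a ∧ a ≤ t)]
      have h2 : (range n).filter (fun a => 1 ≤ a ∧ a ≤ t) = Icc 1 t := by
        ext a; simp [mem_Icc]; omega
      rw [h2, Nat.card_Icc]
      omega
    have hWne : ∀ y ∈ W, π y ≠ π x := by
      intro y hy
      rw [hW, mem_filter] at hy
      have : y ≠ x := by
        intro h
        rw [h] at hy
        simp at hy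
      exact fun hc => this (π.injective hc)
    have hpart : (W.filter fun y => π x < π y).card + (W.filter fun y => ¬ π x < π y).card
        = W.card := Finset.card_filter_add_card_filter_not _
    have hneg : (W.filter fun y => ¬ π x < π y) = (W.filter fun y => π y < π x) := by
      apply Finset.filter_congr
      intro y hy
      constructor
      · intro h
        exact lt_of_le_of_ne (not_lt.mp h) (hWne y hy)
      · intro h
        exact not_lt.mpr (le_of_lt h)
    have hlt : (W.filter fun y => π y < π x).card ≤ (π x).val := by
      have hcv : (univ.filter fun b : Fin n => b.val < (π x).val).card = (π x).val := by
        rw [card_val_filter n (fun a => a < (π x).val)]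
        have : (range n).filter (fun a => a < (π x).val) = range (π x).val := by
          ext a
          simp only [mem_filter, mem_range]
          have := (π x).isLt
          omega
        rw [this, card_range]
      rw [← hcv]
      apply Finset.card_le_card_of_injOn (fun y => π y)
      · intro y hy
        rw [Finset.mem_coe, mem_filter] at hy
        rw [Finset.mem_coe, mem_filter]
        exact ⟨mem_univ _, hy.2⟩
      · exact fun a _ b _ h => π.injective h
    have hfin : (univ.filter fun y : Fin n => π x < π y ∧ (y - x : Fin n).val ≤ t)
        = (W.filter fun y => π x < π y) := by
      rw [hW, Finset.filter_filter]
      apply Finset.filter_congr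
      intro y _
      constructor
      · rintro ⟨h1, h2⟩
        refine ⟨⟨?_, h2⟩, h1⟩
        have hyx : y ≠ x := fun h => by rw [h] at h1; exact lt_irrefl _ h1
        have hsub : (y - x : Fin n) ≠ 0 := sub_ne_zero.mpr hyx
        have : (y - x : Fin n).val ≠ 0 := fun h => hsub (Fin.ext (by simp [h]))
        omega
      · rintro ⟨⟨_, h2⟩, h1⟩
        exact ⟨h1, h2⟩
    rw [hfin]
    rw [hneg] at hpart
    omega
  calc ∑ j ∈ range (t + 1), j
      = ∑ k ∈ range (t + 1), (t - k) := by
        have := Finset.sum_range_reflect (fun j => j) (t + 1)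
        simpa using this.symm
    _ ≤ ∑ k ∈ range n, (t - k) := Finset.sum_le_sum_of_subset (Finset.range_subset_range.mpr ht)
    _ = ∑ x : Fin n, (t - (π x).val) := by
        rw [← Fin.sum_univ_eq_sum_range (fun k => t - k) n]
        exact (Equiv.sum_comp π (fun v : Fin n => t - v.val)).symm
    _ ≤ _ := Finset.sum_le_sum (fun x _ => hx x)

lemma Sp_bound {N : ℕ} (π : Equiv.Perm (Fin (N + 1))) :
    ((∑ q ∈ univ.filter (fun q : Fin (N + 1) × Fin (N + 1) => π q.2 < π q.1),
        ((q.1 - q.2 : Fin (N + 1))).val : ℕ) : ℤ) ≤ Qz (N + 1) := by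
  classical
  set P := univ.filter (fun q : Fin (N + 1) × Fin (N + 1) => π q.2 < π q.1) with hP
  have hlayer : ∀ a : ℕ, a ≤ N → (∑ m ∈ Icc 1 N, if m ≤ a then 1 else 0) = a := by
    intro a ha
    rw [← Finset.card_filter]
    have : (Icc 1 N).filter (fun m => m ≤ a) = Icc 1 a := by
      ext m; simp [mem_Icc]; omega
    rw [this, Nat.card_Icc]
    omega
  have hSp : ∑ q ∈ P, ((q.1 - q.2 : Fin (N + 1))).val
      = ∑ m ∈ Icc 1 N, (P.filter fun q => m ≤ ((q.1 - q.2 : Fin (N + 1))).val).card := by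
    have h1 : ∑ q ∈ P, ((q.1 - q.2 : Fin (N + 1))).val
        = ∑ q ∈ P, ∑ m ∈ Icc 1 N, (if m ≤ ((q.1 - q.2 : Fin (N + 1))).val then 1 else 0) :=
      Finset.sum_congr rfl (fun q _ => (hlayer _ (by
        have := ((q.1 - q.2 : Fin (N + 1))).isLt; omega)).symm)
    rw [h1, Finset.sum_comm]
    exact Finset.sum_congr rfl (fun m _ => (Finset.card_filter _ _).symm)
  have key : ∀ m ∈ Icc 1 N,
      (P.filter fun q => m ≤ ((q.1 - q.2 : Fin (N + 1))).val).card + ∑ j ∈ range m, j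
      ≤ ∑ k ∈ range (N + 1), k := by
    intro m hm
    rw [mem_Icc] at hm
    have hpart := Finset.card_filter_add_card_filter_not
      (s := P) (p := fun q => m ≤ ((q.1 - q.2 : Fin (N + 1))).val)
    have hL := lemL π (m - 1) (by omega)
    have hfe : (univ.filter fun q : Fin (N + 1) × Fin (N + 1) =>
        π q.2 < π q.1 ∧ ((q.1 - q.2 : Fin (N + 1))).val ≤ m - 1)
        = (P.filter fun q => ¬ m ≤ ((q.1 - q.2 : Fin (N + 1))).val) := by
      rw [hP, Finset.filter_filter]
      apply Finset.filter_congr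
      intro q _
      constructor
      · rintro ⟨h1, h2⟩; exact ⟨h1, by omega⟩
      · rintro ⟨h1, h2⟩; exact ⟨h1, by omega⟩
    rw [show m - 1 + 1 = m by omega] at hL
    rw [hfe] at hL
    rw [← cardP π, ← hP]
    omega
  have hsum : (∑ q ∈ P, ((q.1 - q.2 : Fin (N + 1))).val) + ∑ m ∈ Icc 1 N, ∑ j ∈ range m, j
      ≤ N * ∑ k ∈ range (N + 1), k := by
    rw [hSp, ← Finset.sum_add_distrib]
    calc ∑ m ∈ Icc 1 N,
          ((P.filter fun q => m ≤ ((q.1 - q.2 : Fin (N + 1))).val).card + ∑ j ∈ range m, j)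
        ≤ ∑ _m ∈ Icc 1 N, ∑ k ∈ range (N + 1), k := Finset.sum_le_sum key
      _ = N * ∑ k ∈ range (N + 1), k := by
          rw [Finset.sum_const, Nat.card_Icc, smul_eq_mul]
          simp
  have hH : Hz (N + 1) = ((∑ m ∈ Icc 1 N, ∑ j ∈ range m, j : ℕ) : ℤ) := by
    rw [Hz]
    have h1 : range (N + 1) = insert 0 (Icc 1 N) := by
      ext a; simp [mem_range, mem_Icc]; omega
    rw [h1, Finset.sum_insert (by simp)]
    have h0 : Gz 0 = 0 := by simp [Gz]
    rw [h0, zero_add]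
    push_cast
    exact Finset.sum_congr rfl (fun m _ => by rw [Gz])
  have hG : Gz (N + 1) = ((∑ k ∈ range (N + 1), k : ℕ) : ℤ) := by
    rw [Gz]; push_cast; rfl
  have hcast : ((∑ q ∈ P, ((q.1 - q.2 : Fin (N + 1))).val : ℕ) : ℤ) + Hz (N + 1)
      ≤ (N : ℤ) * Gz (N + 1) := by
    rw [hH, hG]
    exact_mod_cast hsum
  have hfinal : 6 * ((N : ℤ) * Gz (N + 1) - Hz (N + 1)) = 6 * Qz (N + 1) := by
    have g := gz (N + 1)
    have h := hz (N + 1)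
    have q := qz (N + 1)
    push_cast at g h q ⊢
    linear_combination 3 * (N : ℤ) * g - h - q
  linarith



end AuxMAI

theorem max_avg_inv {n : ℕ} :
    (∀ π : Equiv.Perm (Fin n),
      6 * ∑ i ∈ Finset.Icc 1 n, (inversions (π * (finRotate n) ^ i) : ℤ)
        ≤ n * (2 * n - 1) * (n - 1)) ∧
    (∃ π : Equiv.Perm (Fin n),
      6 * ∑ i ∈ Finset.Icc 1 n, (inversions (π * (finRotate n) ^ i) : ℤ)
        = n * (2 * n - 1) * (n - 1)) := by
  constructor
  · intro π
    cases n with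
    | zero =>
      rw [Finset.Icc_eq_empty (by omega)]
      norm_num
    | succ N =>
      have hid := sum_Icc_inversions π
      have hb := Sp_bound π
      have hq := qz (N + 1)
      have hcs : ∑ i ∈ Finset.Icc 1 (N + 1), (inversions (π * (finRotate (N + 1)) ^ i) : ℤ)
          = ((∑ i ∈ Finset.Icc 1 (N + 1), inversions (π * (finRotate (N + 1)) ^ i) : ℕ) : ℤ) := by
        push_cast
        rfl
      rw [hcs, hid]
      push_cast at hq hb ⊢
      linarith
  · cases n with
    | zero =>
      refine ⟨1, ?_⟩
      rw [Finset.Icc_eq_empty (by omega)]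
      norm_num
    | succ N =>
      refine ⟨Fin.revPerm, ?_⟩
      have hid := sum_Icc_inversions (Fin.revPerm : Equiv.Perm (Fin (N + 1)))
      have hb := Sp_rev (N := N)
      have hq := qz (N + 1)
      have hcs : ∑ i ∈ Finset.Icc 1 (N + 1),
            (inversions ((Fin.revPerm : Equiv.Perm (Fin (N + 1))) * (finRotate (N + 1)) ^ i) : ℤ)
          = ((∑ i ∈ Finset.Icc 1 (N + 1),
            inversions ((Fin.revPerm : Equiv.Perm (Fin (N + 1))) * (finRotate (N + 1)) ^ i) : ℕ) : ℤ) := by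
        push_cast
        rfl
      rw [hcs, hid]
      push_cast at hq hb ⊢
      linarith
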